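/- arXiv:1202.3033 — 6 statements merged into one kernel-verified Lean document; each statement's English description precedes it below -/
import Mathlib

section
/- For every natural number N ≥ 1 and every real t with |t| < 2πN, the orange-peel curve satisfies the curvature identity z_N''(t) · conj(z_N'(t)) = i · t/√((2πN)² − t²); in particular its signed curvature at time t is t/√((2πN)² − t²), which vanishes at t = 0 (the equator) and tends to +∞ as t → 2πN (the pole). -/
/-- The orange-peel curve of width `1/N`: `z_N(t) = ∫_0^t exp(-i √((2πN)² - u²)) du`. -/
noncomputable def orangePeel (N : ℕ) (t : ℝ) : ℂ :=
  ∫ u in (0:ℝ)..t, Complex.exp (-Complex.I * Real.sqrt ((2 * Real.pi * N) ^ 2 - u ^ 2))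

lemma orangePeel_deriv (N : ℕ) :
    deriv (orangePeel N) = fun t =>
      Complex.exp (-Complex.I * Real.sqrt ((2 * Real.pi * N) ^ 2 - t ^ 2)) := by
  funext t
  have hc : Continuous fun u : ℝ =>
      Complex.exp (-Complex.I * Real.sqrt ((2 * Real.pi * N) ^ 2 - u ^ 2)) := by
    fun_prop
  exact hc.deriv_integral _ _ _

/-- For `N ≥ 1` and `|t| < 2πN`, the orange-peel curve satisfies the curvature identity
`z_N''(t) · conj(z_N'(t)) = i · t / √((2πN)² − t²)`; in particular its signed curvature
at time `t` is `t / √((2πN)² − t²)`. -/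
theorem orangePeel_curvature (N : ℕ) (hN : 1 ≤ N) (t : ℝ) (ht : |t| < 2 * Real.pi * N) :
    deriv (deriv (orangePeel N)) t * (starRingEnd ℂ) (deriv (orangePeel N) t) =
      Complex.I * ((t : ℂ) / (Real.sqrt ((2 * Real.pi * N) ^ 2 - t ^ 2) : ℝ)) := by
  set R : ℝ := 2 * Real.pi * N with hR
  have hRt : t ^ 2 < R ^ 2 := by
    exact sq_lt_sq' (abs_lt.1 ht).1 (abs_lt.1 ht).2
  have hpos : 0 < R ^ 2 - t ^ 2 := by linarith
  have hs : Real.sqrt (R ^ 2 - t ^ 2) ≠ 0 :=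
    ne_of_gt (Real.sqrt_pos.2 hpos)
  -- derivative of the inner real function
  have hinner : HasDerivAt (fun u : ℝ => R ^ 2 - u ^ 2) (-(2 * t)) t := by
    simpa using ((hasDerivAt_pow 2 t).const_sub (R ^ 2))
  have hsqrt : HasDerivAt (fun u : ℝ => Real.sqrt (R ^ 2 - u ^ 2))
      (-(2 * t) / (2 * Real.sqrt (R ^ 2 - t ^ 2))) t :=
    hinner.sqrt (ne_of_gt hpos)
  have hsimp : -(2 * t) / (2 * Real.sqrt (R ^ 2 - t ^ 2))
      = -t / Real.sqrt (R ^ 2 - t ^ 2) := by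
    field_simp
  rw [hsimp] at hsqrt
  have hsqrtC : HasDerivAt (fun u : ℝ => (Real.sqrt (R ^ 2 - u ^ 2) : ℂ))
      ((-t / Real.sqrt (R ^ 2 - t ^ 2) : ℝ) : ℂ) t :=
    hsqrt.ofReal_comp
  have hmul : HasDerivAt (fun u : ℝ => -Complex.I * (Real.sqrt (R ^ 2 - u ^ 2) : ℝ))
      (-Complex.I * ((-t / Real.sqrt (R ^ 2 - t ^ 2) : ℝ) : ℂ)) t :=
    hsqrtC.const_mul _
  have hexp : HasDerivAt (fun u : ℝ =>
      Complex.exp (-Complex.I * (Real.sqrt (R ^ 2 - u ^ 2) : ℝ)))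
      (Complex.exp (-Complex.I * (Real.sqrt (R ^ 2 - t ^ 2) : ℝ)) *
        (-Complex.I * ((-t / Real.sqrt (R ^ 2 - t ^ 2) : ℝ) : ℂ))) t := hmul.cexp
  rw [orangePeel_deriv]
  rw [hexp.deriv]
  set w : ℂ := Complex.exp (-Complex.I * (Real.sqrt (R ^ 2 - t ^ 2) : ℝ)) with hw
  have hconj : (starRingEnd ℂ) w = Complex.exp (Complex.I * (Real.sqrt (R ^ 2 - t ^ 2) : ℝ)) := by
    rw [hw, ← Complex.exp_conj]
    congr 1
    simp [map_mul, Complex.conj_I]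
  have hunit : w * (starRingEnd ℂ) w = 1 := by
    rw [hconj, hw, ← Complex.exp_add]
    ring_nf
    simp
  calc w * (-Complex.I * ((-t / Real.sqrt (R ^ 2 - t ^ 2) : ℝ) : ℂ)) * (starRingEnd ℂ) w
      = (w * (starRingEnd ℂ) w) * (-Complex.I * ((-t / Real.sqrt (R ^ 2 - t ^ 2) : ℝ) : ℂ)) := by
        ring
    _ = Complex.I * ((t : ℂ) / (Real.sqrt (R ^ 2 - t ^ 2) : ℝ)) := by
        rw [hunit, one_mul]
        push_cast
        ring
end

section
/- For every real a > 0 and every real t with |t| ≤ a, |∫_0^t exp(−i·√(a² − u²)) du − ∫_0^t exp(−i·(a − u²/(2a))) du| ≤ |t|⁵/(10·a³), where √ denotes the real square root. -/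
lemma norm_exp_I_sub_one_le (θ : ℝ) : ‖Complex.exp ((θ:ℂ) * Complex.I) - 1‖ ≤ |θ| := by
  have hre : (Complex.exp ((θ:ℂ) * Complex.I) - 1).re = Real.cos θ - 1 := by simp
  have him : (Complex.exp ((θ:ℂ) * Complex.I) - 1).im = Real.sin θ := by simp
  have hsq : ‖Complex.exp ((θ:ℂ) * Complex.I) - 1‖ ^ 2 = 2 - 2 * Real.cos θ := by
    rw [← Complex.normSq_eq_norm_sq, Complex.normSq_apply, hre, him]
    nlinarith [Real.sin_sq_add_cos_sq θ]
  have hsinh : Real.sin (θ / 2) ^ 2 = 1 / 2 - Real.cos θ / 2 := by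
    have h1 := Real.cos_sq (θ / 2)
    rw [show 2 * (θ / 2) = θ by ring] at h1
    have h2 := Real.sin_sq_add_cos_sq (θ / 2)
    linarith
  have hs : Real.sin (θ / 2) ^ 2 ≤ (θ / 2) ^ 2 := by
    have h := Real.abs_sin_le_abs (x := θ / 2)
    nlinarith [sq_abs (Real.sin (θ / 2)), sq_abs (θ / 2), abs_nonneg (Real.sin (θ/2)), abs_nonneg (θ/2)]
  have h2 : ‖Complex.exp ((θ:ℂ) * Complex.I) - 1‖ ^ 2 ≤ |θ| ^ 2 := by
    rw [hsq, sq_abs]; nlinarith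
  have h := Real.sqrt_le_sqrt h2
  rwa [Real.sqrt_sq (norm_nonneg _), Real.sqrt_sq (abs_nonneg _)] at h

lemma phase_real_bound (a u : ℝ) (ha : 0 < a) (hu : |u| ≤ a) :
    |(a - u ^ 2 / (2 * a)) - Real.sqrt (a ^ 2 - u ^ 2)| ≤ u ^ 4 / (2 * a ^ 3) := by
  have hu2 : u ^ 2 ≤ a ^ 2 := by nlinarith [abs_nonneg u, sq_abs u]
  have hnn : (0:ℝ) ≤ a ^ 2 - u ^ 2 := by linarith
  set s := Real.sqrt (a ^ 2 - u ^ 2) with hs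
  have hs2 : s ^ 2 = a ^ 2 - u ^ 2 := Real.sq_sqrt hnn
  have hsnn : 0 ≤ s := Real.sqrt_nonneg _
  set b := a - u ^ 2 / (2 * a) with hbdef
  have hbval : b * (2 * a) = 2 * a ^ 2 - u ^ 2 := by
    rw [hbdef]; field_simp
  have key2 : b ^ 2 * (4 * a ^ 2) = s ^ 2 * (4 * a ^ 2) + u ^ 4 := by
    rw [hs2, hbdef]; field_simp; ring
  clear_value s b
  have hb : a / 2 ≤ b := by nlinarith [mul_pos ha ha]
  have hbs : s ^ 2 ≤ b ^ 2 := by nlinarith [sq_nonneg (u ^ 2), mul_pos ha ha]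
  have hsle : s ≤ b := by
    have h := Real.sqrt_le_sqrt hbs
    rwa [Real.sqrt_sq hsnn, Real.sqrt_sq (by linarith)] at h
  have h3 : (b - s) * (2 * a ^ 3) ≤ u ^ 4 := by
    nlinarith [mul_le_mul_of_nonneg_left (show a / 2 ≤ b + s by linarith)
      (sub_nonneg.2 hsle), mul_pos (mul_pos ha ha) ha, sq_nonneg a]
  have hden : (0:ℝ) < 2 * a ^ 3 := by positivity
  rw [abs_le]
  constructor
  · have : (0:ℝ) ≤ u ^ 4 / (2 * a ^ 3) := by positivity
    linarith
  · exact (le_div_iff₀ hden).2 h3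

lemma phase_exp_bound (a u : ℝ) (ha : 0 < a) (hu : |u| ≤ a) :
    ‖Complex.exp (-Complex.I * Real.sqrt (a ^ 2 - u ^ 2)) -
      Complex.exp (-Complex.I * ((a:ℂ) - (u:ℂ) ^ 2 / (2 * (a:ℂ))))‖ ≤ u ^ 4 / (2 * a ^ 3) := by
  have hcast : ((a:ℂ) - (u:ℂ) ^ 2 / (2 * (a:ℂ))) = ((a - u ^ 2 / (2 * a) : ℝ) : ℂ) := by
    push_cast; ring
  rw [hcast]
  set x : ℝ := Real.sqrt (a ^ 2 - u ^ 2)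
  set y : ℝ := a - u ^ 2 / (2 * a)
  have key : Complex.exp (-Complex.I * x) - Complex.exp (-Complex.I * y) =
      Complex.exp (-Complex.I * y) * (Complex.exp (((y - x : ℝ) : ℂ) * Complex.I) - 1) := by
    rw [mul_sub, ← Complex.exp_add, mul_one]
    push_cast
    ring_nf
  rw [key, norm_mul]
  have h1 : ‖Complex.exp (-Complex.I * y)‖ = 1 := by
    rw [Complex.norm_exp]; simp
  rw [h1, one_mul]
  calc ‖Complex.exp (((y - x : ℝ) : ℂ) * Complex.I) - 1‖ ≤ |y - x| :=
        norm_exp_I_sub_one_le _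
    _ ≤ u ^ 4 / (2 * a ^ 3) := phase_real_bound a u ha hu

lemma norm_integral_le_of_norm_le_uIoc {f : ℝ → ℂ} {g : ℝ → ℝ} {a b : ℝ}
    {μ : MeasureTheory.Measure ℝ}
    (h : ∀ᵐ t ∂μ.restrict (Set.uIoc a b), ‖f t‖ ≤ g t) (hbound : IntervalIntegrable g μ a b) :
    ‖∫ t in a..b, f t ∂μ‖ ≤ |∫ t in a..b, g t ∂μ| := by
  rw [intervalIntegral.norm_integral_eq_norm_integral_uIoc, intervalIntegral.abs_integral_eq_abs_integral_uIoc]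
  exact (MeasureTheory.norm_integral_le_of_norm_le hbound.def'
    h).trans (le_abs_self _)

/-- The error made when replacing the exact phase `−√(a² − u²)` of the orange-peel curve
by its quadratic approximation `−(a − u²/(2a))`: for `a > 0` and `|t| ≤ a`,
`|∫_0^t exp(−i √(a² − u²)) du − ∫_0^t exp(−i (a − u²/(2a))) du| ≤ |t|⁵/(10 a³)`. -/
theorem phase_approx_integral_error (a : ℝ) (ha : 0 < a) (t : ℝ) (ht : |t| ≤ a) :
    ‖(∫ u in (0:ℝ)..t, Complex.exp (-Complex.I * Real.sqrt (a ^ 2 - u ^ 2))) -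
      ∫ u in (0:ℝ)..t, Complex.exp (-Complex.I * (a - u ^ 2 / (2 * a)))‖ ≤
    |t| ^ 5 / (10 * a ^ 3) := by
  have hi1 : IntervalIntegrable (fun u : ℝ => Complex.exp (-Complex.I * Real.sqrt (a ^ 2 - u ^ 2)))
      MeasureTheory.volume 0 t := by
    apply Continuous.intervalIntegrable; fun_prop
  have hi2 : IntervalIntegrable (fun u : ℝ => Complex.exp (-Complex.I * (a - u ^ 2 / (2 * a))))
      MeasureTheory.volume 0 t := by
    apply Continuous.intervalIntegrable; fun_prop
  rw [← intervalIntegral.integral_sub hi1 hi2]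
  have key := norm_integral_le_of_norm_le_uIoc (μ := MeasureTheory.volume) (a := 0) (b := t)
      (f := fun u : ℝ => Complex.exp (-Complex.I * Real.sqrt (a ^ 2 - u ^ 2)) -
        Complex.exp (-Complex.I * (a - u ^ 2 / (2 * a))))
      (g := fun u : ℝ => u ^ 4 / (2 * a ^ 3)) ?_ ?_
  · refine key.trans ?_
    have hv : ∫ u in (0:ℝ)..t, u ^ 4 / (2 * a ^ 3) = t ^ 5 / (10 * a ^ 3) := by
      rw [intervalIntegral.integral_div, integral_pow]
      ring
    rw [hv, abs_div, abs_of_pos (by positivity : (0:ℝ) < 10 * a ^ 3), ← abs_pow]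
  · filter_upwards [MeasureTheory.ae_restrict_mem measurableSet_uIoc] with u hu
    apply phase_exp_bound a u ha
    have h1 : -a ≤ min 0 t := le_min (by linarith) (by linarith [neg_abs_le t])
    have h2 : max 0 t ≤ a := max_le ha.le (le_trans (le_abs_self t) ht)
    exact abs_le.2 ⟨by linarith [hu.1], by linarith [hu.2]⟩
  · apply Continuous.intervalIntegrable; fun_prop
end

section
/- (Main theorem.) For every integer N ≥ 1 and every real T with |T| ≤ √(πN), the rescaled orange-peel curve approximates the Euler spiral: |(1/√(4πN)) · z_N(√(4πN)·T) − F(T)| ≤ |T|⁵/(5πN). In particular, whenever |T| is small compared with N^{1/5} (e.g. whenever T ≪ N^{0.2}), the part of the orange-peel curve of width 1/N parameterized between −√(4πN)·T and √(4πN)·T is, after rescaling by 1/√(4πN), a good approximation of the part of the Euler spiral parameterized between −T and T. -/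
open Real intervalIntegral

lemma norm_exp_I_mul_sub_le (x y : ℝ) :
    ‖Complex.exp (Complex.I * x) - Complex.exp (Complex.I * y)‖ ≤ |x - y| := by
  have h : Complex.exp (Complex.I * x) - Complex.exp (Complex.I * y)
      = Complex.exp (Complex.I * y) * (Complex.exp (Complex.I * ((x - y : ℝ) : ℂ)) - 1) := by
    rw [mul_sub, mul_one, ← Complex.exp_add]
    push_cast
    ring_nf
  rw [h, norm_mul]
  have h1 : ‖Complex.exp (Complex.I * (y : ℂ))‖ = 1 := by
    rw [Complex.norm_exp]
    simp
  rw [h1, one_mul]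
  set t := x - y with ht
  clear_value t
  have h2 : ‖Complex.exp (Complex.I * (t : ℂ)) - 1‖ ^ 2 = 2 - 2 * Real.cos t := by
    rw [mul_comm Complex.I, Complex.sq_norm, Complex.normSq_apply]
    simp only [Complex.sub_re, Complex.sub_im, Complex.one_re, Complex.one_im,
      Complex.exp_ofReal_mul_I_re, Complex.exp_ofReal_mul_I_im]
    nlinarith [Real.sin_sq_add_cos_sq t]
  have h3 : ‖Complex.exp (Complex.I * (t : ℂ)) - 1‖ ^ 2 ≤ t ^ 2 := by
    have hc : 1 - t ^ 2 / 2 ≤ Real.cos t := Real.one_sub_sq_div_two_le_cos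
    rw [h2]; linarith
  have := Real.sqrt_le_sqrt h3
  rwa [Real.sqrt_sq (norm_nonneg _), Real.sqrt_sq_eq_abs] at this



/-- The Euler spiral `F(T) = ∫_0^T exp(i v²) dv`. -/
noncomputable def eulerSpiral (T : ℝ) : ℂ :=
  ∫ v in (0:ℝ)..T, Complex.exp (Complex.I * v ^ 2)

/-- Main theorem: for every integer `N ≥ 1` and every real `T` with `|T| ≤ √(πN)`,
the rescaled orange-peel curve approximates the Euler spiral:
`|(1/√(4πN)) · z_N(√(4πN) T) − F(T)| ≤ |T|⁵/(5πN)`. -/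
theorem rescaled_orangePeel_approx_eulerSpiral (N : ℕ) (hN : 1 ≤ N) (T : ℝ)
    (hT : |T| ≤ Real.sqrt (Real.pi * N)) :
    ‖(1 / (Real.sqrt (4 * Real.pi * N) : ℂ)) *
        orangePeel N (Real.sqrt (4 * Real.pi * N) * T) - eulerSpiral T‖ ≤
      |T| ^ 5 / (5 * Real.pi * N) := by
  have hπ := Real.pi_pos
  have hN0 : (0:ℝ) < N := by exact_mod_cast hN
  set A := Real.pi * N with hA
  have hA0 : 0 < A := by positivity
  set a := Real.sqrt (4 * Real.pi * N) with ha
  have ha0 : 0 < a := Real.sqrt_pos.mpr (by positivity)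
  have ha2 : a ^ 2 = 4 * A := by rw [ha, Real.sq_sqrt (by positivity), hA]; ring
  have hsub : (1 / (a : ℂ)) * orangePeel N (a * T)
      = ∫ v in (0:ℝ)..T,
          Complex.exp (-Complex.I * Real.sqrt ((2 * Real.pi * N) ^ 2 - (a * v) ^ 2)) := by
    rw [orangePeel,
      intervalIntegral.integral_comp_mul_left
        (fun u => Complex.exp (-Complex.I * Real.sqrt ((2 * Real.pi * N) ^ 2 - u ^ 2)))
        (ne_of_gt ha0)]
    simp [Complex.real_smul, one_div]
  have hcont1 : Continuous fun v : ℝ =>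
      Complex.exp (-Complex.I * Real.sqrt ((2 * Real.pi * N) ^ 2 - (a * v) ^ 2)) := by
    fun_prop
  have hcont2 : Continuous fun v : ℝ => Complex.exp (Complex.I * (v:ℂ) ^ 2) := by fun_prop
  rw [hsub, eulerSpiral,
    ← intervalIntegral.integral_sub (hcont1.intervalIntegrable _ _)
      (hcont2.intervalIntegrable _ _)]
  have hbound : ∀ v ∈ Set.uIoc (0:ℝ) T,
      ‖Complex.exp (-Complex.I * Real.sqrt ((2 * Real.pi * N) ^ 2 - (a * v) ^ 2)) -
        Complex.exp (Complex.I * (v:ℂ) ^ 2)‖ ≤ v ^ 4 / A := by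
    intro v hv'
    have hvT : |v| ≤ |T| := by
      rcases Set.mem_uIoc.mp hv' with ⟨h1, h2⟩ | ⟨h1, h2⟩
      · rw [abs_of_pos h1]; exact h2.trans (le_abs_self T)
      · rw [abs_of_nonpos h2]; exact (neg_le_neg h1.le).trans (neg_le_abs T)
    have hv2 : v ^ 2 ≤ A := by
      have h1 : |v| ^ 2 ≤ Real.sqrt A ^ 2 := pow_le_pow_left₀ (abs_nonneg v) (hvT.trans hT) 2
      rwa [sq_abs, Real.sq_sqrt hA0.le] at h1
    set s := Real.sqrt ((2 * Real.pi * N) ^ 2 - (a * v) ^ 2) with hs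
    have hinner : (2 * Real.pi * N) ^ 2 - (a * v) ^ 2 = 4 * A ^ 2 - 4 * A * v ^ 2 := by
      rw [mul_pow a v, ha2, hA]; ring
    have hs0 : 0 ≤ s := Real.sqrt_nonneg _
    have hs2 : s ^ 2 = 4 * A ^ 2 - 4 * A * v ^ 2 := by
      rw [hs, hinner, Real.sq_sqrt (by nlinarith)]
    have hsle : s ≤ 2 * A - v ^ 2 := by
      rw [hs, hinner]
      have h := Real.sqrt_le_sqrt
        (show 4 * A ^ 2 - 4 * A * v ^ 2 ≤ (2 * A - v ^ 2) ^ 2 by nlinarith [sq_nonneg (v ^ 2)])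
      rwa [Real.sqrt_sq (by nlinarith)] at h
    have hrw : Complex.exp (Complex.I * (v:ℂ) ^ 2)
        = Complex.exp (Complex.I * ((-(2 * A - v ^ 2) : ℝ) : ℂ)) := by
      rw [← mul_one (Complex.exp (Complex.I * ((-(2 * A - v ^ 2) : ℝ) : ℂ))),
        ← Complex.exp_int_mul_two_pi_mul_I (N : ℤ), ← Complex.exp_add]
      congr 1
      push_cast [hA]
      ring
    have h1 : -Complex.I * (s : ℂ) = Complex.I * ((-s : ℝ) : ℂ) := by push_cast; ring
    rw [hrw, h1]
    calc ‖Complex.exp (Complex.I * ((-s : ℝ) : ℂ)) -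
          Complex.exp (Complex.I * ((-(2 * A - v ^ 2) : ℝ) : ℂ))‖
        ≤ |(-s) - (-(2 * A - v ^ 2))| := norm_exp_I_mul_sub_le _ _
      _ = (2 * A - v ^ 2) - s := by rw [abs_of_nonneg (by linarith)]; ring
      _ ≤ v ^ 4 / A := by
          rw [le_div_iff₀ hA0]
          nlinarith [mul_le_mul_of_nonneg_left (show A ≤ (2 * A - v ^ 2) + s by linarith)
            (show (0:ℝ) ≤ (2 * A - v ^ 2) - s by linarith)]
  have hgint : IntervalIntegrable (fun v : ℝ => v ^ 4 / A) MeasureTheory.volume 0 T :=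
    (Continuous.intervalIntegrable (by fun_prop) _ _)
  calc ‖∫ v in (0:ℝ)..T,
        (Complex.exp (-Complex.I * Real.sqrt ((2 * Real.pi * N) ^ 2 - (a * v) ^ 2)) -
          Complex.exp (Complex.I * (v:ℂ) ^ 2))‖
      ≤ |∫ v in (0:ℝ)..T, v ^ 4 / A| :=
        intervalIntegral.norm_integral_le_abs_of_norm_le
          (MeasureTheory.ae_restrict_of_forall_mem measurableSet_uIoc hbound) hgint
    _ = |T| ^ 5 / (5 * Real.pi * N) := by
        rw [intervalIntegral.integral_div, integral_pow]
        rw [abs_div, abs_div, abs_of_pos hA0]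
        norm_num [abs_pow, hA]
        ring
end

section
/- For every fixed real T, the rescaled orange-peel curves converge pointwise to the Euler spiral: (1/√(4πN)) · z_N(√(4πN)·T) tends to F(T) as the integer N tends to infinity. -/
open Filter

lemma op_arg_eq (N : ℕ) (v : ℝ) :
    (2 * Real.pi * N) ^ 2 - (Real.sqrt (4 * Real.pi * N) * v) ^ 2
      = (2 * Real.pi * N - v ^ 2) ^ 2 - (v ^ 2) ^ 2 := by
  rw [mul_pow (Real.sqrt (4 * Real.pi * N)) v 2, Real.sq_sqrt (by positivity)]
  ring

lemma b_tendsto (v : ℝ) :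
    Tendsto (fun N : ℕ => 2 * Real.pi * N - v ^ 2) atTop atTop := by
  apply tendsto_atTop_add_const_right
  exact Tendsto.const_mul_atTop (by positivity) tendsto_natCast_atTop_atTop

lemma sqrt_diff_tendsto (v : ℝ) :
    Tendsto (fun N : ℕ => (2 * Real.pi * N - v ^ 2) -
      Real.sqrt ((2 * Real.pi * N - v ^ 2) ^ 2 - (v ^ 2) ^ 2)) atTop (nhds 0) := by
  have hb := b_tendsto v
  have hev : ∀ᶠ N : ℕ in atTop, v ^ 2 + 1 ≤ 2 * Real.pi * N - v ^ 2 :=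
    hb.eventually_ge_atTop _
  have hup : ∀ᶠ N : ℕ in atTop,
      (2 * Real.pi * N - v ^ 2) - Real.sqrt ((2 * Real.pi * N - v ^ 2) ^ 2 - (v ^ 2) ^ 2)
        ≤ (v ^ 2) ^ 2 / (2 * Real.pi * N - v ^ 2) := by
    filter_upwards [hev] with N h1
    set b := 2 * Real.pi * N - v ^ 2 with hbdef
    have hb0 : 0 < b := lt_of_lt_of_le (by positivity) h1
    have hnn : 0 ≤ b ^ 2 - (v ^ 2) ^ 2 := by nlinarith [sq_nonneg v]
    set s := Real.sqrt (b ^ 2 - (v ^ 2) ^ 2) with hsdef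
    have hs0 : 0 ≤ s := Real.sqrt_nonneg _
    have hs2 : s ^ 2 = b ^ 2 - (v ^ 2) ^ 2 := Real.sq_sqrt hnn
    rw [le_div_iff₀ hb0]
    nlinarith [hs2, hs0, hb0]
  have hlow : ∀ᶠ N : ℕ in atTop,
      0 ≤ (2 * Real.pi * N - v ^ 2) - Real.sqrt ((2 * Real.pi * N - v ^ 2) ^ 2 - (v ^ 2) ^ 2) := by
    filter_upwards [hev] with N h1
    set b := 2 * Real.pi * N - v ^ 2 with hbdef
    have hb0 : 0 < b := lt_of_lt_of_le (by positivity) h1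
    have hle : Real.sqrt (b ^ 2 - (v ^ 2) ^ 2) ≤ b := by
      calc Real.sqrt (b ^ 2 - (v ^ 2) ^ 2) ≤ Real.sqrt (b ^ 2) :=
            Real.sqrt_le_sqrt (by nlinarith [sq_nonneg (v ^ 2)])
        _ = b := Real.sqrt_sq hb0.le
    linarith
  have hquot : Tendsto (fun N : ℕ => (v ^ 2) ^ 2 / (2 * Real.pi * N - v ^ 2)) atTop (nhds 0) :=
    Tendsto.div_atTop tendsto_const_nhds hb
  exact squeeze_zero' hlow hup hquot

lemma pointwise_lim (v : ℝ) :
    Tendsto (fun N : ℕ => Complex.exp (-Complex.I *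
      Real.sqrt ((2 * Real.pi * N) ^ 2 - (Real.sqrt (4 * Real.pi * N) * v) ^ 2))) atTop
      (nhds (Complex.exp (Complex.I * v ^ 2))) := by
  have hd := sqrt_diff_tendsto v
  set d : ℕ → ℝ := fun N => (2 * Real.pi * N - v ^ 2) -
      Real.sqrt ((2 * Real.pi * N - v ^ 2) ^ 2 - (v ^ 2) ^ 2) with hddef
  have key : ∀ N : ℕ, Complex.exp (-Complex.I *
      Real.sqrt ((2 * Real.pi * N) ^ 2 - (Real.sqrt (4 * Real.pi * N) * v) ^ 2))
      = Complex.exp (Complex.I * v ^ 2) * Complex.exp (Complex.I * (d N)) := by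
    intro N
    rw [op_arg_eq, ← Complex.exp_add]
    apply Complex.exp_eq_exp_iff_exists_int.mpr
    refine ⟨-(N : ℤ), ?_⟩
    have hsd : ((Real.sqrt ((2 * Real.pi * N - v ^ 2) ^ 2 - (v ^ 2) ^ 2) : ℝ) : ℂ)
        = (2 * Real.pi * N - v ^ 2 : ℝ) - (d N : ℝ) := by
      simp [hddef]
    rw [hsd]
    push_cast
    ring
  have h1 : Tendsto (fun N => ((d N : ℝ) : ℂ)) atTop (nhds 0) := by
    have := (Complex.continuous_ofReal.tendsto 0).comp hd
    simpa [Function.comp_def] using this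
  have h2 : Tendsto (fun N => Complex.I * ((d N : ℝ) : ℂ)) atTop (nhds 0) := by
    have := (tendsto_const_nhds (x := Complex.I) (f := atTop)).mul h1
    simpa using this
  have h3 : Tendsto (fun N => Complex.exp (Complex.I * ((d N : ℝ) : ℂ))) atTop (nhds 1) := by
    have := (Complex.continuous_exp.tendsto 0).comp h2
    simpa [Function.comp_def] using this
  have h4 := (tendsto_const_nhds (x := Complex.exp (Complex.I * v ^ 2)) (f := atTop)).mul h3
  rw [mul_one] at h4
  exact h4.congr fun N => (key N).symm

/-- For every fixed real `T`, the rescaled orange-peel curves converge pointwise to the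
Euler spiral: `(1/√(4πN)) · z_N(√(4πN) T) → F(T)` as `N → ∞`. -/
theorem rescaled_orangePeel_tendsto_eulerSpiral (T : ℝ) :
    Tendsto (fun N : ℕ =>
        (1 / (Real.sqrt (4 * Real.pi * N) : ℂ)) *
          orangePeel N (Real.sqrt (4 * Real.pi * N) * T))
      atTop (nhds (eulerSpiral T)) := by
  have hDCT : Tendsto (fun N : ℕ => ∫ v in (0:ℝ)..T, Complex.exp (-Complex.I *
        Real.sqrt ((2 * Real.pi * N) ^ 2 - (Real.sqrt (4 * Real.pi * N) * v) ^ 2)))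
      atTop (nhds (eulerSpiral T)) := by
    unfold eulerSpiral
    apply intervalIntegral.tendsto_integral_filter_of_dominated_convergence (fun _ => (1:ℝ))
    · filter_upwards with N
      apply Continuous.aestronglyMeasurable
      fun_prop
    · filter_upwards with N
      filter_upwards with x _
      simp [Complex.norm_exp]
    · exact intervalIntegrable_const
    · filter_upwards with x _
      exact pointwise_lim x
  refine Tendsto.congr' ?_ hDCT
  filter_upwards [eventually_ge_atTop 1] with N hN
  have hNpos : (0:ℝ) < N := by exact_mod_cast hN
  have hc : (0:ℝ) < Real.sqrt (4 * Real.pi * N) :=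
    Real.sqrt_pos.mpr (by positivity)
  set c : ℝ := Real.sqrt (4 * Real.pi * N) with hcdef
  have hsub := intervalIntegral.smul_integral_comp_mul_left
    (fun u : ℝ => Complex.exp (-Complex.I *
      Real.sqrt ((2 * Real.pi * N) ^ 2 - u ^ 2))) c (a := 0) (b := T)
  rw [mul_zero] at hsub
  have hop : orangePeel N (c * T) = c • ∫ v in (0:ℝ)..T, Complex.exp (-Complex.I *
      Real.sqrt ((2 * Real.pi * N) ^ 2 - (c * v) ^ 2)) := by
    rw [hsub]; rfl
  rw [hop, Complex.real_smul, ← mul_assoc, one_div,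
    inv_mul_cancel₀ (Complex.ofReal_ne_zero.mpr hc.ne'), one_mul]
end

section
/- The Euler spiral winds around the two limit points ±(√(π/8), √(π/8)): as t → +∞, F(t) tends to √(π/8)·(1 + i), and as t → −∞, F(t) tends to −√(π/8)·(1 + i). Equivalently, the improper Fresnel integrals satisfy ∫_0^∞ cos(v²) dv = ∫_0^∞ sin(v²) dv = √(π/8). -/
open Filter

section Aux
open Complex intervalIntegral Set
open scoped Interval

lemma hasDerivAt_aux (b : ℂ) (hb : b ≠ 0) (v : ℝ) (hv : v ≠ 0) :
    HasDerivAt (fun v : ℝ => cexp (b * v ^ 2) / (2 * b * v))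
      (cexp (b * v ^ 2) - cexp (b * v ^ 2) / (2 * b * v ^ 2)) v := by
  have hvc : (v:ℂ) ≠ 0 := by exact_mod_cast hv
  have h1 : HasDerivAt (fun v : ℝ => cexp (b * v ^ 2)) (cexp (b * v ^ 2) * (2 * b * v)) v := by
    have : HasDerivAt (fun v : ℝ => b * (v:ℂ) ^ 2) (2 * b * v) v := by
      have := (((hasDerivAt_id (v:ℂ)).pow 2).comp_ofReal).const_mul b
      refine this.congr_deriv ?_; simp; ring
    simpa using this.cexp
  have h2 : HasDerivAt (fun v : ℝ => 2 * b * (v:ℂ)) (2 * b) v := by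
    simpa using (Complex.ofRealCLM.hasDerivAt (x := v)).const_mul (2*b)
  have hne : 2 * b * (v:ℂ) ≠ 0 := by simp [hb, hvc]
  have := h1.div h2 hne
  refine this.congr_deriv ?_
  field_simp

lemma exp_norm_le (b : ℂ) (hbre : b.re ≤ 0) (v : ℝ) : ‖cexp (b * v ^ 2)‖ ≤ 1 := by
  rw [Complex.norm_exp]
  have : (b * (v:ℂ) ^ 2).re = b.re * v ^ 2 := by
    simp [Complex.mul_re, pow_two]
  rw [this]
  calc Real.exp (b.re * v ^ 2) ≤ Real.exp 0 :=
        Real.exp_le_exp.2 (mul_nonpos_of_nonpos_of_nonneg hbre (sq_nonneg v))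
    _ = 1 := Real.exp_zero

lemma tail_bound (b : ℂ) (hbre : b.re ≤ 0) (hb1 : 1 ≤ ‖b‖)
    (T S : ℝ) (hT : 1 ≤ T) (hTS : T ≤ S) :
    ‖∫ v in T..S, cexp (b * v ^ 2)‖ ≤ 1 / T := by
  have hb : b ≠ 0 := by
    intro h; rw [h] at hb1; simp at hb1; linarith
  have hT0 : 0 < T := lt_of_lt_of_le one_pos hT
  have hS0 : 0 < S := lt_of_lt_of_le hT0 hTS
  set f : ℝ → ℂ := fun v => cexp (b * v ^ 2) / (2 * b * v) with hf
  set u : ℝ → ℂ := fun v => cexp (b * v ^ 2) - cexp (b * v ^ 2) / (2 * b * v ^ 2) with hu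
  have hmem : ∀ v ∈ uIcc T S, (1:ℝ) ≤ v := by
    intro v hv
    rw [uIcc_of_le hTS] at hv
    linarith [hv.1]
  have hder : ∀ v ∈ uIcc T S, HasDerivAt f (u v) v := fun v hv =>
    hasDerivAt_aux b hb v (by have := hmem v hv; linarith)
  have hcont1 : Continuous fun v : ℝ => cexp (b * v ^ 2) := by fun_prop
  have hcont2 : ContinuousOn (fun v : ℝ => cexp (b * v ^ 2) / (2 * b * v ^ 2)) (uIcc T S) := by
    apply hcont1.continuousOn.div (by fun_prop)
    intro v hv
    have h1 := hmem v hv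
    have : (v:ℂ) ≠ 0 := by exact_mod_cast (by linarith : v ≠ 0)
    simp [hb, this]
  have hint2 : IntervalIntegrable (fun v : ℝ => cexp (b * v ^ 2) / (2 * b * v ^ 2)) MeasureTheory.volume T S :=
    hcont2.intervalIntegrable
  have hint1 : IntervalIntegrable (fun v : ℝ => cexp (b * v ^ 2)) MeasureTheory.volume T S :=
    hcont1.intervalIntegrable _ _
  have hintu : IntervalIntegrable u MeasureTheory.volume T S := hint1.sub hint2
  have key := integral_eq_sub_of_hasDerivAt hder hintu
  have hsplit : ∫ v in T..S, u v =
      (∫ v in T..S, cexp (b * v ^ 2)) - ∫ v in T..S, cexp (b * v ^ 2) / (2 * b * v ^ 2) :=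
    integral_sub hint1 hint2
  have keq : (∫ v in T..S, cexp (b * v ^ 2)) =
      f S - f T + ∫ v in T..S, cexp (b * v ^ 2) / (2 * b * v ^ 2) := by
    rw [hsplit] at key; linear_combination key
  -- bound on f
  have hfb : ∀ v : ℝ, 1 ≤ v → ‖f v‖ ≤ 1 / (2 * v) := by
    intro v hv
    have hv0 : (0:ℝ) < v := by linarith
    rw [hf]
    simp only [norm_div]
    have hden : ‖(2 * b * (v:ℂ))‖ = 2 * ‖b‖ * v := by
      simp [abs_of_pos hv0]
    rw [hden]
    rw [div_le_div_iff₀ (by positivity) (by positivity)]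
    calc ‖cexp (b * v ^ 2)‖ * (2 * v) ≤ 1 * (2 * v) := by
          apply mul_le_mul_of_nonneg_right (exp_norm_le b hbre v) (by positivity)
      _ ≤ 1 * (2 * ‖b‖ * v) := by
          rw [one_mul, one_mul]
          have : 2 * v = 2 * 1 * v := by ring
          rw [this]
          apply mul_le_mul_of_nonneg_right (by linarith) hv0.le
  -- bound on integral of second term
  have hintbound : ‖∫ v in T..S, cexp (b * v ^ 2) / (2 * b * v ^ 2)‖ ≤ 1 / (2*T) - 1/(2*S) := by
    have hle : ∀ v ∈ Ι T S, ‖cexp (b * v ^ 2) / (2 * b * (v:ℂ) ^ 2)‖ ≤ (1/2) * v ^ (-2 : ℤ) := by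
      intro v hv
      rw [uIoc_of_le hTS] at hv
      have hv1 : (1:ℝ) ≤ v := le_of_lt (lt_of_le_of_lt hT hv.1)
      have hv0 : (0:ℝ) < v := by linarith
      simp only [norm_div]
      have hden : ‖(2 * b * (v:ℂ)^2)‖ = 2 * ‖b‖ * v^2 := by
        simp [abs_of_pos hv0, _root_.sq_abs]
      rw [hden, zpow_neg, div_le_iff₀ (by positivity)]
      have : 1 / 2 * ((v:ℝ) ^ (2:ℤ))⁻¹ * (2 * ‖b‖ * v ^ 2) = ‖b‖ := by
        simp only [zpow_two]
        field_simp
      rw [this]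
      exact le_trans (exp_norm_le b hbre v) hb1
    have hgint : IntervalIntegrable (fun v : ℝ => (1/2) * v ^ (-2 : ℤ)) MeasureTheory.volume T S := by
      apply ContinuousOn.intervalIntegrable
      apply ContinuousOn.mul continuousOn_const
      apply ContinuousOn.zpow₀ continuousOn_id (-2 : ℤ)
      intro x hx
      refine Or.inl ?_
      have := hmem x hx
      intro h
      simp only [id] at h
      rw [h] at this; linarith
    have hae : ∀ᵐ (t : ℝ) ∂(MeasureTheory.volume.restrict (Set.uIoc T S)),
        ‖cexp (b * (t:ℂ) ^ 2) / (2 * b * (t:ℂ) ^ 2)‖ ≤ (1/2 : ℝ) * (t:ℝ) ^ (-2:ℤ) :=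
      (MeasureTheory.ae_restrict_iff' measurableSet_uIoc).2 (MeasureTheory.ae_of_all _ hle)
    have := norm_integral_le_abs_of_norm_le hae hgint
    have hcomp : ∫ v in T..S, (1/2 : ℝ) * v ^ (-2:ℤ) = 1/(2*T) - 1/(2*S) := by
      rw [integral_const_mul]
      rw [integral_zpow]
      · norm_num
        ring
      · right
        constructor
        · norm_num
        · rw [uIcc_of_le hTS]
          intro h
          linarith [h.1]
    rw [hcomp] at this
    refine le_trans this (le_of_eq (abs_of_nonneg ?_))
    have h1 : 1/(2*S) ≤ 1/(2*T) := by
      apply one_div_le_one_div_of_le (by positivity) (by linarith)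
    linarith
  rw [keq]
  have hfS := hfb S (le_trans hT hTS)
  have hfT := hfb T hT
  calc ‖f S - f T + ∫ v in T..S, cexp (b * v ^ 2) / (2 * b * v ^ 2)‖
      ≤ ‖f S - f T‖ + ‖∫ v in T..S, cexp (b * v ^ 2) / (2 * b * v ^ 2)‖ := norm_add_le _ _
    _ ≤ (‖f S‖ + ‖f T‖) + (1/(2*T) - 1/(2*S)) := by
        gcongr
        exact norm_sub_le _ _
    _ ≤ (1/(2*S) + 1/(2*T)) + (1/(2*T) - 1/(2*S)) := by gcongr
    _ = 1 / T := by field_simp; ring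
lemma limit_value : ((Real.pi : ℂ) / (-Complex.I)) ^ (1/2 : ℂ) / 2
    = (Real.sqrt (Real.pi / 8) : ℂ) * (1 + Complex.I) := by
  have hpi : (Real.pi : ℂ) / (-Complex.I) = Real.pi * Complex.I := by
    rw [div_neg, Complex.div_I]; ring
  have hne : (Real.pi : ℂ) * Complex.I ≠ 0 := by
    simp [Real.pi_ne_zero, Complex.I_ne_zero]
  have habs : ‖(Real.pi:ℂ) * Complex.I‖ = Real.pi := by
    simp [Real.pi_pos.le, _root_.abs_of_nonneg]
  have harg : Complex.arg ((Real.pi:ℂ) * Complex.I) = Real.pi / 2 := by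
    rw [Complex.arg_eq_pi_div_two_iff]; simp [Real.pi_pos]
  have hlog : Complex.log ((Real.pi:ℂ) * Complex.I)
      = (Real.log Real.pi : ℂ) + (Real.pi/2 : ℝ) * Complex.I := by
    rw [Complex.log, habs, harg]
  rw [hpi, Complex.cpow_def_of_ne_zero hne, hlog]
  have : ((Real.log Real.pi : ℂ) + (Real.pi/2 : ℝ) * Complex.I) * (1/2)
      = ((Real.log Real.pi * (1/2) : ℝ) : ℂ) + ((Real.pi/4 : ℝ) : ℂ) * Complex.I := by
    push_cast; ring
  rw [this, Complex.exp_add]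
  rw [show ((Real.log Real.pi * (1/2) : ℝ) : ℂ) = ((Real.log Real.pi * (1/2) : ℝ) : ℂ) from rfl,
    ← Complex.ofReal_exp]
  have h1 : Real.exp (Real.log Real.pi * (1/2)) = Real.sqrt Real.pi := by
    rw [← Real.rpow_def_of_pos Real.pi_pos, ← Real.sqrt_eq_rpow]
  have h2 : Complex.exp (((Real.pi/4 : ℝ) : ℂ) * Complex.I)
      = (Real.cos (Real.pi/4) : ℂ) + (Real.sin (Real.pi/4) : ℂ) * Complex.I := by
    rw [Complex.exp_mul_I, ← Complex.ofReal_cos, ← Complex.ofReal_sin]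
  rw [h1, h2, Real.cos_pi_div_four, Real.sin_pi_div_four]
  have h3 : Real.sqrt (Real.pi/8) = Real.sqrt Real.pi * Real.sqrt 2 / 4 := by
    rw [show (Real.pi/8 : ℝ) = Real.pi * (1/8) by ring, Real.sqrt_mul Real.pi_pos.le,
      show (1/8:ℝ) = (Real.sqrt 2 / 4)^2 by rw [div_pow, Real.sq_sqrt]; norm_num; norm_num,
      Real.sqrt_sq (by positivity)]
    ring
  rw [h3]
  push_cast
  ring

noncomputable def Feps (ε : ℝ) (T : ℝ) : ℂ :=
  ∫ v in (0:ℝ)..T, cexp (-((ε:ℂ) - Complex.I) * v ^ 2)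

noncomputable def Geps (ε : ℝ) : ℂ :=
  ((Real.pi : ℂ) / ((ε:ℂ) - Complex.I)) ^ (1/2 : ℂ) / 2

lemma abs_one_le (ε : ℝ) : 1 ≤ ‖(-((ε:ℂ) - Complex.I))‖ := by
  rw [norm_neg]
  have h2 : (‖(ε:ℂ) - Complex.I‖)^2 = ε^2 + 1 := by
    rw [Complex.sq_norm, Complex.normSq_apply]
    simp
    ring
  nlinarith [norm_nonneg ((ε:ℂ) - Complex.I), sq_nonneg ε]

lemma Feps_tail (ε : ℝ) (hε : 0 ≤ ε) (T S : ℝ) (hT : 1 ≤ T) (hTS : T ≤ S) :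
    ‖Feps ε S - Feps ε T‖ ≤ 1 / T := by
  have hcont : Continuous fun v : ℝ => cexp (-((ε:ℂ) - Complex.I) * v ^ 2) := by fun_prop
  have hadj := integral_add_adjacent_intervals (a := (0:ℝ)) (b := T) (c := S)
    (f := fun v : ℝ => cexp (-((ε:ℂ) - Complex.I) * v ^ 2))
    (hcont.intervalIntegrable (μ := MeasureTheory.volume) _ _) (hcont.intervalIntegrable (μ := MeasureTheory.volume) _ _)
  have : Feps ε S - Feps ε T = ∫ v in T..S, cexp (-((ε:ℂ) - Complex.I) * v ^ 2) := by
    rw [Feps, Feps, ← hadj]; ring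
  rw [this]
  apply tail_bound _ _ (abs_one_le ε) T S hT hTS
  simp [hε]

lemma Feps_tendsto (ε : ℝ) (hε : 0 < ε) :
    Tendsto (Feps ε) atTop (nhds (Geps ε)) := by
  have hb : 0 < ((ε:ℂ) - Complex.I).re := by simp [hε]
  have h1 := integral_gaussian_complex_Ioi hb
  have h2 := MeasureTheory.intervalIntegral_tendsto_integral_Ioi 0
    ((integrable_cexp_neg_mul_sq hb).integrableOn) tendsto_id
  rw [h1] at h2
  exact h2

lemma Geps_bound (ε : ℝ) (hε : 0 < ε) (T : ℝ) (hT : 1 ≤ T) :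
    ‖Geps ε - Feps ε T‖ ≤ 1 / T := by
  have h1 : Tendsto (fun S => ‖Feps ε S - Feps ε T‖) atTop (nhds ‖Geps ε - Feps ε T‖) :=
    (((Feps_tendsto ε hε).sub_const (Feps ε T)).norm)
  apply le_of_tendsto h1
  filter_upwards [eventually_ge_atTop T] with S hS
  exact Feps_tail ε hε.le T S hT hS

lemma Feps_euler (ε : ℝ) (hε : 0 ≤ ε) (T : ℝ) (hT : 1 ≤ T) :
    ‖Feps ε T - eulerSpiral T‖ ≤ ε * T ^ 3 := by
  have hT0 : (0:ℝ) ≤ T := by linarith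
  have hcont : Continuous fun v : ℝ => cexp (-((ε:ℂ) - Complex.I) * v ^ 2) := by fun_prop
  have hcont2 : Continuous fun v : ℝ => cexp (Complex.I * v ^ 2) := by fun_prop
  have hsub : Feps ε T - eulerSpiral T
      = ∫ v in (0:ℝ)..T, (cexp (-((ε:ℂ) - Complex.I) * v ^ 2) - cexp (Complex.I * v ^ 2)) := by
    rw [Feps, eulerSpiral, integral_sub (hcont.intervalIntegrable _ _) (hcont2.intervalIntegrable _ _)]
  rw [hsub]
  have hbound : ∀ v ∈ Ι (0:ℝ) T,
      ‖cexp (-((ε:ℂ) - Complex.I) * v ^ 2) - cexp (Complex.I * v ^ 2)‖ ≤ ε * T ^ 2 := by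
    intro v hv
    rw [uIoc_of_le hT0] at hv
    have hv0 : 0 < v := hv.1
    have hvT : v ≤ T := hv.2
    have hsplit : cexp (-((ε:ℂ) - Complex.I) * v ^ 2)
        = cexp (Complex.I * v ^ 2) * ((Real.exp (-(ε * v ^ 2)) : ℝ) : ℂ) := by
      rw [Complex.ofReal_exp, ← Complex.exp_add]
      congr 1
      push_cast
      ring
    have hnorm1 : ‖cexp (Complex.I * (v:ℂ) ^ 2)‖ = 1 := by
      rw [Complex.norm_exp]
      have : (Complex.I * (v:ℂ) ^ 2).re = 0 := by
        simp [Complex.mul_re, pow_two]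
      rw [this, Real.exp_zero]
    calc ‖cexp (-((ε:ℂ) - Complex.I) * v ^ 2) - cexp (Complex.I * v ^ 2)‖
        = ‖cexp (Complex.I * (v:ℂ) ^ 2)‖ * ‖(((Real.exp (-(ε * v ^ 2)) : ℝ) : ℂ) - 1)‖ := by
          rw [hsplit, ← mul_sub_one, norm_mul]
      _ = |Real.exp (-(ε * v ^ 2)) - 1| := by
          rw [hnorm1, one_mul]
          rw [show (((Real.exp (-(ε * v ^ 2)) : ℝ) : ℂ) - 1) = ((Real.exp (-(ε * v ^ 2)) - 1 : ℝ) : ℂ) by push_cast; ring]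
          rw [Complex.norm_real, Real.norm_eq_abs]
      _ ≤ ε * v ^ 2 := by
          have h1 : Real.exp (-(ε * v ^ 2)) ≤ 1 := Real.exp_le_one_iff.2 (by nlinarith)
          have h2 := Real.add_one_le_exp (-(ε * v ^ 2))
          rw [abs_sub_comm, _root_.abs_of_nonneg (by linarith)]
          linarith
      _ ≤ ε * T ^ 2 := by
          have hsq : v ^ 2 ≤ T ^ 2 := by nlinarith
          exact mul_le_mul_of_nonneg_left hsq hε
  have := norm_integral_le_of_norm_le_const hbound
  calc ‖∫ v in (0:ℝ)..T, (cexp (-((ε:ℂ) - Complex.I) * v ^ 2) - cexp (Complex.I * v ^ 2))‖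
      ≤ ε * T ^ 2 * |T - 0| := this
    _ = ε * T ^ 3 := by rw [sub_zero, _root_.abs_of_nonneg hT0]; ring

lemma Geps_tendsto :
    Tendsto Geps (nhdsWithin 0 (Set.Ioi (0:ℝ)))
      (nhds ((Real.sqrt (Real.pi / 8) : ℂ) * (1 + Complex.I))) := by
  have hpi : (Real.pi : ℂ) / (-Complex.I) = Real.pi * Complex.I := by
    rw [div_neg, Complex.div_I]; ring
  have c1 : ContinuousAt (fun ε : ℝ => (Real.pi:ℂ)/((ε:ℂ) - Complex.I)) 0 := by
    apply ContinuousAt.div continuousAt_const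
    · exact (Complex.continuous_ofReal.continuousAt).sub continuousAt_const
    · simp [Complex.ext_iff]
  have hc : ContinuousAt (fun ε : ℝ => ((Real.pi:ℂ)/((ε:ℂ) - Complex.I)) ^ (1/2:ℂ)) 0 := by
    apply c1.cpow continuousAt_const
    rw [Complex.mem_slitPlane_iff]
    right
    rw [show (Real.pi:ℂ) / (((0:ℝ):ℂ) - Complex.I) = (Real.pi:ℂ) / (-Complex.I) by norm_num, hpi]
    simp [Real.pi_ne_zero]
  have h3 := ((hc.div_const 2).tendsto).mono_left
    (nhdsWithin_le_nhds (s := Set.Ioi (0:ℝ)))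
  have heq : ((Real.pi:ℂ)/(((0:ℝ):ℂ) - Complex.I)) ^ (1/2:ℂ) / 2
      = (Real.sqrt (Real.pi/8) : ℂ) * (1 + Complex.I) := by
    rw [show ((0:ℝ):ℂ) - Complex.I = -Complex.I by simp]; exact limit_value
  rw [show (fun ε : ℝ => ((Real.pi:ℂ)/((ε:ℂ) - Complex.I)) ^ (1/2:ℂ)) 0 / 2
      = ((Real.pi:ℂ)/(((0:ℝ):ℂ) - Complex.I)) ^ (1/2:ℂ) / 2 from rfl, heq] at h3
  exact h3

lemma main_bound (T : ℝ) (hT : 1 ≤ T) :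
    ‖eulerSpiral T - (Real.sqrt (Real.pi / 8) : ℂ) * (1 + Complex.I)‖ ≤ 1 / T := by
  set A := (Real.sqrt (Real.pi / 8) : ℂ) * (1 + Complex.I) with hA
  have hkey : ∀ᶠ ε in nhdsWithin 0 (Set.Ioi (0:ℝ)),
      ‖eulerSpiral T - A‖ ≤ ε * T ^ 3 + 1 / T + ‖Geps ε - A‖ := by
    filter_upwards [self_mem_nhdsWithin] with ε (hε : 0 < ε)
    calc ‖eulerSpiral T - A‖
        = ‖(eulerSpiral T - Feps ε T) + (Feps ε T - Geps ε) + (Geps ε - A)‖ := by ring_nf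
      _ ≤ ‖(eulerSpiral T - Feps ε T) + (Feps ε T - Geps ε)‖ + ‖Geps ε - A‖ := norm_add_le _ _
      _ ≤ ‖eulerSpiral T - Feps ε T‖ + ‖Feps ε T - Geps ε‖ + ‖Geps ε - A‖ := by
          gcongr; exact norm_add_le _ _
      _ ≤ ε * T ^ 3 + 1 / T + ‖Geps ε - A‖ := by
          gcongr
          · rw [norm_sub_rev]; exact Feps_euler ε hε.le T hT
          · rw [norm_sub_rev]; exact Geps_bound ε hε T hT
  have hlim : Tendsto (fun ε : ℝ => ε * T ^ 3 + 1 / T + ‖Geps ε - A‖)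
      (nhdsWithin 0 (Set.Ioi (0:ℝ))) (nhds (0 * T ^ 3 + 1 / T + 0)) := by
    apply Tendsto.add
    · apply Tendsto.add_const
      exact (tendsto_id.mono_left nhdsWithin_le_nhds).mul_const _
    · have := (Geps_tendsto.sub_const A).norm
      rw [← hA, sub_self, norm_zero] at this
      exact this
  have := ge_of_tendsto hlim hkey
  simpa using this

lemma euler_atTop :
    Tendsto eulerSpiral atTop (nhds ((Real.sqrt (Real.pi / 8) : ℂ) * (1 + Complex.I))) := by
  rw [tendsto_iff_norm_sub_tendsto_zero]
  apply squeeze_zero' (g := fun T : ℝ => 1 / T)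
  · filter_upwards with T using norm_nonneg _
  · filter_upwards [eventually_ge_atTop (1:ℝ)] with T hT using main_bound T hT
  · simpa using tendsto_inv_atTop_zero

lemma euler_odd (t : ℝ) : eulerSpiral (-t) = -eulerSpiral t := by
  have h := intervalIntegral.integral_comp_neg (a := (0:ℝ)) (b := t)
    (fun v : ℝ => cexp (Complex.I * v ^ 2))
  simp only [neg_zero] at h
  have h2 : (∫ x in (0:ℝ)..t, cexp (Complex.I * ((-x : ℝ):ℂ) ^ 2))
      = ∫ x in (0:ℝ)..t, cexp (Complex.I * (x:ℂ) ^ 2) := by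
    apply intervalIntegral.integral_congr
    intro x _
    simp [neg_sq]
  rw [h2] at h
  rw [eulerSpiral, eulerSpiral, h, intervalIntegral.integral_symm (-t) 0]

/-- The Euler spiral winds around the two limit points `±√(π/8)·(1 + i)`:
`F(t) → √(π/8)·(1+i)` as `t → +∞` and `F(t) → −√(π/8)·(1+i)` as `t → −∞`.
Equivalently, `∫_0^∞ cos(v²) dv = ∫_0^∞ sin(v²) dv = √(π/8)`. -/
theorem eulerSpiral_limit_points :
    Tendsto eulerSpiral atTop
      (nhds ((Real.sqrt (Real.pi / 8) : ℂ) * (1 + Complex.I))) ∧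
    Tendsto eulerSpiral atBot
      (nhds (-((Real.sqrt (Real.pi / 8) : ℂ) * (1 + Complex.I)))) := by
  refine ⟨euler_atTop, ?_⟩
  have h1 : Tendsto (fun t : ℝ => -eulerSpiral (-t)) atBot
      (nhds (-((Real.sqrt (Real.pi / 8) : ℂ) * (1 + Complex.I)))) :=
    (euler_atTop.comp tendsto_neg_atBot_atTop).neg
  apply h1.congr
  intro t
  rw [euler_odd]
  ring

end Aux
end

section
/- The Euler spiral is a bounded curve: there exists a constant C > 0 such that |F(t)| ≤ C for all real t. -/
section EulerSpiralAux

open Complex intervalIntegral Set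

private lemma es_norm_exp_I_sq (v : ℝ) : ‖Complex.exp (Complex.I * (v:ℂ) ^ 2)‖ = 1 := by
  have : Complex.I * (v:ℂ)^2 = ((v^2 : ℝ) : ℂ) * Complex.I := by push_cast; ring
  rw [this, Complex.norm_exp_ofReal_mul_I]

private lemma es_deriv_aux {v : ℝ} (hv : v ≠ 0) :
    HasDerivAt (fun x : ℝ => Complex.exp (Complex.I * (x:ℂ)^2) / (2 * Complex.I * x))
      (Complex.exp (Complex.I * (v:ℂ)^2) * (1 + Complex.I / (2 * (v:ℂ)^2))) v := by
  have hv' : (v:ℂ) ≠ 0 := Complex.ofReal_ne_zero.mpr hv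
  have hne : 2 * Complex.I * (v:ℂ) ≠ 0 := by simp [hv', Complex.I_ne_zero]
  have h1 : HasDerivAt (fun x : ℝ => Complex.exp (Complex.I * (x:ℂ)^2))
      (Complex.exp (Complex.I * (v:ℂ)^2) * (Complex.I * (2 * v))) v := by
    have := (((hasDerivAt_pow 2 (v:ℂ)).const_mul Complex.I).comp_ofReal).cexp
    simpa using this
  have h0 : HasDerivAt (fun x : ℝ => 2 * Complex.I * (x:ℂ)) (2 * Complex.I) v := by
    simpa using ((hasDerivAt_id (v:ℂ)).const_mul (2 * Complex.I)).comp_ofReal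
  have := h1.div h0 hne
  convert this using 1 <;> try rfl
  have hI2 : (Complex.I)^2 = -1 := Complex.I_sq
  field_simp
  linear_combination hI2

private lemma es_cont : Continuous (fun v : ℝ => Complex.exp (Complex.I * (v:ℂ)^2)) := by
  fun_prop

private lemma es_tail_bound {t : ℝ} (ht : 1 ≤ t) :
    ‖∫ v in (1:ℝ)..t, Complex.exp (Complex.I * (v:ℂ)^2)‖ ≤ 3/2 := by
  set e : ℝ → ℂ := fun v => Complex.exp (Complex.I * (v:ℂ)^2) with he
  set f : ℝ → ℂ := fun v => Complex.exp (Complex.I * (v:ℂ)^2) / (2 * Complex.I * v) with hf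
  have huIcc : Set.uIcc (1:ℝ) t = Set.Icc 1 t := Set.uIcc_of_le ht
  have hpos : ∀ v ∈ Set.uIcc (1:ℝ) t, (1:ℝ) ≤ v := by
    intro v hv; rw [huIcc] at hv; exact hv.1
  have hne : ∀ v ∈ Set.uIcc (1:ℝ) t, v ≠ 0 := fun v hv => by
    have := hpos v hv; linarith
  have hcont : ContinuousOn (fun v : ℝ =>
      e v * (1 + Complex.I / (2 * (v:ℂ)^2))) (Set.uIcc 1 t) := by
    apply ContinuousOn.mul (es_cont.continuousOn)
    apply ContinuousOn.add continuousOn_const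
    apply ContinuousOn.div continuousOn_const
    · fun_prop
    · intro v hv
      have hv0 : (v:ℂ) ≠ 0 := Complex.ofReal_ne_zero.mpr (hne v hv)
      simp [pow_eq_zero_iff, hv0]
  have hg_cont : ContinuousOn (fun v : ℝ =>
      e v * (Complex.I / (2 * (v:ℂ)^2))) (Set.uIcc 1 t) := by
    apply ContinuousOn.mul (es_cont.continuousOn)
    apply ContinuousOn.div continuousOn_const
    · fun_prop
    · intro v hv
      have hv0 : (v:ℂ) ≠ 0 := Complex.ofReal_ne_zero.mpr (hne v hv)
      simp [pow_eq_zero_iff, hv0]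
  have h_int_g : IntervalIntegrable (fun v : ℝ => e v * (Complex.I / (2 * (v:ℂ)^2)))
      MeasureTheory.volume 1 t := hg_cont.intervalIntegrable
  have h_int_e : IntervalIntegrable e MeasureTheory.volume 1 t :=
    es_cont.intervalIntegrable 1 t
  have hftc : ∫ v in (1:ℝ)..t, (e v * (1 + Complex.I / (2 * (v:ℂ)^2))) = f t - f 1 := by
    apply intervalIntegral.integral_eq_sub_of_hasDerivAt
    · intro v hv
      exact es_deriv_aux (hne v hv)
    · exact hcont.intervalIntegrable
  have hsplit : ∫ v in (1:ℝ)..t, (e v * (1 + Complex.I / (2 * (v:ℂ)^2)))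
      = (∫ v in (1:ℝ)..t, e v) + ∫ v in (1:ℝ)..t, e v * (Complex.I / (2 * (v:ℂ)^2)) := by
    rw [← intervalIntegral.integral_add h_int_e h_int_g]
    apply intervalIntegral.integral_congr
    intro v hv; simp [mul_add]
  have key : (∫ v in (1:ℝ)..t, e v)
      = f t - f 1 - ∫ v in (1:ℝ)..t, e v * (Complex.I / (2 * (v:ℂ)^2)) := by
    rw [← hftc, hsplit]; ring
  have hnorm_f : ∀ v : ℝ, 1 ≤ v → ‖f v‖ ≤ 1/2 := by
    intro v hv
    have hv0 : (0:ℝ) < v := by linarith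
    rw [hf]
    simp only [norm_div]
    rw [es_norm_exp_I_sq]
    have : ‖2 * Complex.I * (v:ℂ)‖ = 2 * v := by
      simp [norm_mul, Complex.norm_real, abs_of_pos hv0]
    rw [this]
    rw [div_le_div_iff₀ (by linarith) (by norm_num)]
    linarith
  have hrem : ‖∫ v in (1:ℝ)..t, e v * (Complex.I / (2 * (v:ℂ)^2))‖ ≤ 1/2 := by
    have h1 : ‖∫ v in (1:ℝ)..t, e v * (Complex.I / (2 * (v:ℂ)^2))‖
        ≤ ∫ v in (1:ℝ)..t, ‖e v * (Complex.I / (2 * (v:ℂ)^2))‖ :=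
      intervalIntegral.norm_integral_le_integral_norm ht
    have h2 : ∫ v in (1:ℝ)..t, ‖e v * (Complex.I / (2 * (v:ℂ)^2))‖
        = ∫ v in (1:ℝ)..t, (2 * v^2)⁻¹ := by
      apply intervalIntegral.integral_congr
      intro v hv
      have hv1 : (1:ℝ) ≤ v := hpos v hv
      have hv0 : (0:ℝ) < v := by linarith
      simp only [norm_mul, norm_div]
      rw [es_norm_exp_I_sq]
      have : ‖2 * (v:ℂ)^2‖ = 2 * v^2 := by
        rw [show (2 * (v:ℂ)^2) = ((2 * v^2 : ℝ) : ℂ) by push_cast; ring, Complex.norm_real]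
        exact abs_of_pos (by positivity)
      simp [this, Complex.norm_I, div_eq_mul_inv]
    have h3 : ∫ v in (1:ℝ)..t, (2 * v^2)⁻¹ = (2:ℝ)⁻¹ - (2*t)⁻¹ := by
      have : ∀ v ∈ Set.uIcc (1:ℝ) t, HasDerivAt (fun x : ℝ => -(2*x)⁻¹) ((2*v^2)⁻¹) v := by
        intro v hv
        have hv1 : (1:ℝ) ≤ v := hpos v hv
        have hv0 : v ≠ 0 := by linarith
        have h2v : (2*v : ℝ) ≠ 0 := by positivity
        have := (((hasDerivAt_id v).const_mul (2:ℝ)).inv h2v).neg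
        convert this using 1 <;> try rfl
        simp only [id]
        field_simp
      rw [intervalIntegral.integral_eq_sub_of_hasDerivAt this]
      · ring
      · apply ContinuousOn.intervalIntegrable
        apply ContinuousOn.inv₀ (by fun_prop)
        intro v hv
        have hv1 : (1:ℝ) ≤ v := hpos v hv
        positivity
    have h4 : (2:ℝ)⁻¹ - (2*t)⁻¹ ≤ 1/2 := by
      have : (0:ℝ) ≤ (2*t)⁻¹ := by positivity
      linarith
    calc _ ≤ _ := h1
      _ = _ := h2
      _ = _ := h3
      _ ≤ _ := h4
  rw [key]
  calc ‖f t - f 1 - ∫ v in (1:ℝ)..t, e v * (Complex.I / (2 * (v:ℂ)^2))‖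
      ≤ ‖f t - f 1‖ + ‖∫ v in (1:ℝ)..t, e v * (Complex.I / (2 * (v:ℂ)^2))‖ := norm_sub_le _ _
    _ ≤ (‖f t‖ + ‖f 1‖) + 1/2 := add_le_add (norm_sub_le _ _) hrem
    _ ≤ (1/2 + 1/2) + 1/2 := by
        gcongr
        · exact hnorm_f t ht
        · exact hnorm_f 1 le_rfl
    _ = 3/2 := by norm_num

end EulerSpiralAux

/-- The Euler spiral is a bounded curve: there is a constant `C > 0` with `|F(t)| ≤ C`
for all real `t`. -/
theorem eulerSpiral_bounded : ∃ C : ℝ, 0 < C ∧ ∀ t : ℝ, ‖eulerSpiral t‖ ≤ C := by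
  refine ⟨3, by norm_num, ?_⟩
  have hodd : ∀ t : ℝ, eulerSpiral (-t) = - eulerSpiral t := by
    intro t
    unfold eulerSpiral
    have h1 := intervalIntegral.integral_comp_neg (a := (0:ℝ)) (b := t)
      (f := fun v : ℝ => Complex.exp (Complex.I * (v:ℂ)^2))
    rw [neg_zero] at h1
    have h2 : (∫ x in (0:ℝ)..t, Complex.exp (Complex.I * ((-x:ℝ):ℂ)^2))
        = ∫ x in (0:ℝ)..t, Complex.exp (Complex.I * (x:ℂ)^2) := by
      apply intervalIntegral.integral_congr
      intro v hv
      push_cast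
      ring_nf
    calc (∫ v in (0:ℝ)..(-t), Complex.exp (Complex.I * (v:ℂ)^2))
        = -∫ v in (-t:ℝ)..(0:ℝ), Complex.exp (Complex.I * (v:ℂ)^2) :=
          (intervalIntegral.integral_symm _ _).trans (by ring)
      _ = -∫ x in (0:ℝ)..t, Complex.exp (Complex.I * (x:ℂ)^2) := by rw [← h1, h2]
  have hpos : ∀ t : ℝ, 0 ≤ t → ‖eulerSpiral t‖ ≤ 3 := by
    intro t ht
    by_cases hle : t ≤ 1
    · have : ‖eulerSpiral t‖ ≤ 1 * |t - 0| := by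
        apply intervalIntegral.norm_integral_le_of_norm_le_const
        intro x _
        exact le_of_eq (es_norm_exp_I_sq x)
      rw [_root_.abs_of_nonneg (by linarith : (0:ℝ) ≤ t - 0)] at this
      linarith
    · push_neg at hle
      have hsplit : eulerSpiral t
          = (∫ v in (0:ℝ)..1, Complex.exp (Complex.I * (v:ℂ)^2))
            + ∫ v in (1:ℝ)..t, Complex.exp (Complex.I * (v:ℂ)^2) := by
        unfold eulerSpiral
        rw [intervalIntegral.integral_add_adjacent_intervals
          (es_cont.intervalIntegrable 0 1) (es_cont.intervalIntegrable 1 t)]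
      rw [hsplit]
      have h1 : ‖∫ v in (0:ℝ)..1, Complex.exp (Complex.I * (v:ℂ)^2)‖ ≤ 1 := by
        have : ‖∫ v in (0:ℝ)..1, Complex.exp (Complex.I * (v:ℂ)^2)‖ ≤ 1 * |1 - 0| := by
          apply intervalIntegral.norm_integral_le_of_norm_le_const
          intro x _
          exact le_of_eq (es_norm_exp_I_sq x)
        simpa using this
      calc _ ≤ _ := norm_add_le _ _
        _ ≤ 1 + 3/2 := add_le_add h1 (es_tail_bound hle.le)
        _ ≤ 3 := by norm_num
  intro t
  rcases le_total 0 t with h | h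
  · exact hpos t h
  · have := hodd (-t)
    rw [neg_neg] at this
    rw [this, norm_neg]
    exact hpos (-t) (by linarith)
end
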